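/- arXiv:2111.02824 — 3 statements merged into one kernel-verified Lean document; each statement's English description precedes it below -/
import Mathlib

section
/- An LFSA S is not *-strongly detectable if and only if in the self-composition CC(S) there exists a run q0' →s1' q1' →s2' q1' →s3' q2' with q0' an initial state of CC(S), ℓ(s2') a nonempty output sequence, and the left and right components of q2' distinct. -/
/-- A labeled finite-state automaton (LFSA): transition relation `δ`,
initial states `Q0`, labeling `lab` (where `none` stands for ε, i.e. unobservable). -/
structure LFSA (Q : Type*) (E : Type*) (A : Type*) where
  δ : Q → E → Q → Prop
  Q0 : Set Q
  lab : E → Option A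

namespace LFSA

variable {Q Q1 Q2 E A : Type*}

/-- A run `q →s q'` over a finite event sequence. -/
inductive Run (S : LFSA Q E A) : Q → List E → Q → Prop
  | nil (q : Q) : Run S q [] q
  | cons {q q' q'' : Q} {e : E} {s : List E} :
      S.δ q e q' → Run S q' s q'' → Run S q (e :: s) q''

/-- Output (label sequence) of an event sequence. -/
def out (S : LFSA Q E A) (s : List E) : List A := s.filterMap S.lab

/-- Generated finite language. -/
def L (S : LFSA Q E A) : Set (List E) := {s | ∃ q0 ∈ S.Q0, ∃ q, S.Run q0 s q}

/-- Current-state estimate after observing `σ`. -/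
def M (S : LFSA Q E A) (σ : List A) : Set Q :=
  {q | ∃ q0 ∈ S.Q0, ∃ s : List E, S.out s = σ ∧ S.Run q0 s q}

/-- Reachability via a nonempty event sequence. -/
def ReachPlus (S : LFSA Q E A) (q q' : Q) : Prop := ∃ s : List E, s ≠ [] ∧ S.Run q s q'

/-- There is a transition cycle reachable from `q` (a cycle at `q` itself counts). -/
def CycleReachableFrom (S : LFSA Q E A) (q : Q) : Prop :=
  ∃ p : Q, (p = q ∨ S.ReachPlus q p) ∧ ∃ s : List E, s ≠ [] ∧ S.Run p s p

/-- `*`-strong detectability. -/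
def StarSD (S : LFSA Q E A) : Prop :=
  ∃ k : ℕ, 0 < k ∧ ∀ s ∈ S.L, ∀ σ : List A, σ <+: S.out s → k < σ.length →
    ∃ q : Q, S.M σ = {q}

/-- ω-strong detectability. -/
def OmegaSD (S : LFSA Q E A) : Prop :=
  ∃ k : ℕ, 0 < k ∧ ∀ (s : ℕ → E) (ρ : ℕ → Q), ρ 0 ∈ S.Q0 →
    (∀ n : ℕ, S.δ (ρ n) (s n) (ρ (n + 1))) →
    ∀ (n : ℕ) (σ : List A), σ <+: S.out (List.ofFn (fun i : Fin n => s i)) →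
      k < σ.length → ∃ q : Q, S.M σ = {q}

/-- Concurrent composition: observable transitions with equal labels synchronize,
unobservable transitions interleave. Events are pairs over `Option E` (`none` = ε). -/
def CC (S1 : LFSA Q1 E A) (S2 : LFSA Q2 E A) :
    LFSA (Q1 × Q2) (Option E × Option E) A where
  δ p ev p' :=
    match ev with
    | (some e, some e') =>
        (∃ a : A, S1.lab e = some a ∧ S2.lab e' = some a) ∧
          S1.δ p.1 e p'.1 ∧ S2.δ p.2 e' p'.2
    | (some e, none) => S1.lab e = none ∧ S1.δ p.1 e p'.1 ∧ p.2 = p'.2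
    | (none, some e') => S2.lab e' = none ∧ p.1 = p'.1 ∧ S2.δ p.2 e' p'.2
    | (none, none) => False
  Q0 := {p | p.1 ∈ S1.Q0 ∧ p.2 ∈ S2.Q0}
  lab ev := ev.1.bind S1.lab

/-- Left projection of an event sequence of a concurrent composition. -/
def lproj (s : List (Option E × Option E)) : List E := s.filterMap Prod.fst

/-- Right projection of an event sequence of a concurrent composition. -/
def rproj (s : List (Option E × Option E)) : List E := s.filterMap Prod.snd

/-- Unobservable reach of a set of states. -/
def UR (S : LFSA Q E A) (X : Set Q) : Set Q :=
  {q | ∃ q0 ∈ X, ∃ s : List E, S.out s = [] ∧ S.Run q0 s q}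

/-- One step of the observer (powerset construction). -/
def obsStep (S : LFSA Q E A) (x : Set Q) (a : A) : Set Q :=
  {q' | ∃ q ∈ x, ∃ (e : E) (p : Q), S.lab e = some a ∧ S.δ q e p ∧ q' ∈ S.UR {p}}

/-- Observer run (deterministic). -/
def obsRun (S : LFSA Q E A) (x : Set Q) (σ : List A) : Set Q := σ.foldl S.obsStep x

/-- The concurrent composition `CC(S_ε, Obs^ε)` of `S` (with events relabeled by their
labels) and a deterministic observer with step function `ostep` and initial state `x0`:
observable transitions move both components, unobservable ones move only the left one. -/
def CCObs (S : LFSA Q E A) (ostep : Set Q → A → Set Q) (x0 : Set Q) :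
    LFSA (Q × Set Q) E A where
  δ p e p' := S.δ p.1 e p'.1 ∧
    (∀ a : A, S.lab e = some a → p'.2 = ostep p.2 a) ∧
    (S.lab e = none → p'.2 = p.2)
  Q0 := {p | p.1 ∈ S.Q0 ∧ p.2 = x0}
  lab := S.lab

/-- A state is reachable if it is an initial state or reachable from one. -/
def Reachable (S : LFSA Q E A) (q : Q) : Prop := ∃ q0 ∈ S.Q0, ∃ s : List E, S.Run q0 s q

/-- Restriction of an automaton to a set of allowed states. -/
def restrict (S : LFSA Q E A) (P : Set Q) : LFSA Q E A where
  δ q e q' := S.δ q e q' ∧ q ∈ P ∧ q' ∈ P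
  Q0 := S.Q0 ∩ P
  lab := S.lab

/-- A run all of whose states (including endpoints) lie in `P`. -/
inductive RunIn (S : LFSA Q E A) (P : Set Q) : Q → List E → Q → Prop
  | nil (q : Q) : q ∈ P → RunIn S P q [] q
  | cons {q q' q'' : Q} {e : E} {s : List E} :
      q ∈ P → S.δ q e q' → RunIn S P q' s q'' → RunIn S P q (e :: s) q''

/-- Normal subautomaton: all faulty transitions removed. -/
def Sn (S : LFSA Q E A) (Ef : Set E) : LFSA Q E A where
  δ q e q' := S.δ q e q' ∧ e ∉ Ef
  Q0 := S.Q0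
  lab := S.lab

/-- Faulty subautomaton: faulty transitions together with all their
predecessor and successor transitions. -/
def Sf (S : LFSA Q E A) (Ef : Set E) : LFSA Q E A where
  δ q e q' := S.δ q e q' ∧ ∃ c f d, f ∈ Ef ∧ S.δ c f d ∧
      ((q = c ∧ e = f ∧ q' = d) ∨ (c = q' ∨ S.ReachPlus q' c) ∨ (q = d ∨ S.ReachPlus d q))
  Q0 := S.Q0
  lab := S.lab

/-- `s` ends with a faulty event. -/
def EndsFaulty (Ef : Set E) (s : List E) : Prop := ∃ (t : List E) (e : E), e ∈ Ef ∧ s = t ++ [e]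

/-- `E_f`-diagnosability. -/
def Diag (S : LFSA Q E A) (Ef : Set E) : Prop :=
  ∃ k : ℕ, ∀ s ∈ S.L, EndsFaulty Ef s → ∀ s' : List E, s ++ s' ∈ S.L → k < s'.length →
    ∀ s'' ∈ S.L, S.out s'' = S.out (s ++ s') → ∃ e ∈ Ef, e ∈ s''

/-- `E_f`-predictability. -/
def Pred (S : LFSA Q E A) (Ef : Set E) : Prop :=
  ∃ k : ℕ, ∀ s ∈ S.L, EndsFaulty Ef s →
    ∃ s' : List E, s' <+: s ∧ (∀ e ∈ s', e ∉ Ef) ∧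
      ∀ u v : List E, u ++ v ∈ S.L → S.out s' = S.out u → (∀ e ∈ u, e ∉ Ef) →
        k < v.length → ∃ e ∈ Ef, e ∈ v

/-- Current-state opacity. -/
def CSO (S : LFSA Q E A) (QS : Set Q) : Prop :=
  ∀ q0 ∈ S.Q0, ∀ (s : List E) (q : Q), S.Run q0 s q → q ∈ QS →
    ∃ q0' ∈ S.Q0, ∃ (s' : List E) (q' : Q), S.Run q0' s' q' ∧ q' ∉ QS ∧ S.out s = S.out s'

/-- Initial-state opacity. -/
def ISO (S : LFSA Q E A) (QS : Set Q) : Prop :=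
  ∀ q0 ∈ S.Q0 ∩ QS, ∀ (s : List E) (q : Q), S.Run q0 s q →
    ∃ q0' ∈ S.Q0 \ QS, ∃ (s' : List E) (q' : Q), S.Run q0' s' q' ∧ S.out s = S.out s'

/-- Infinite-step opacity. -/
def InfSO (S : LFSA Q E A) (QS : Set Q) : Prop :=
  ∀ q0 ∈ S.Q0, ∀ (s1 : List E) (q1 : Q) (s2 : List E) (q2 : Q),
    S.Run q0 s1 q1 → S.Run q1 s2 q2 → q1 ∈ QS →
    ∃ q0' ∈ S.Q0, ∃ (s1' : List E) (q1' : Q) (s2' : List E) (q2' : Q),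
      S.Run q0' s1' q1' ∧ S.Run q1' s2' q2' ∧ q1' ∉ QS ∧
        S.out s1 = S.out s1' ∧ S.out s2 = S.out s2'

/-- `K`-step opacity. -/
def KSO (S : LFSA Q E A) (QS : Set Q) (K : ℕ) : Prop :=
  ∀ q0 ∈ S.Q0, ∀ (s1 : List E) (q1 : Q) (s2 : List E) (q2 : Q),
    S.Run q0 s1 q1 → S.Run q1 s2 q2 → q1 ∈ QS → (S.out s2).length ≤ K →
    ∃ q0' ∈ S.Q0, ∃ (s1' : List E) (q1' : Q) (s2' : List E) (q2' : Q),
      S.Run q0' s1' q1' ∧ S.Run q1' s2' q2' ∧ q1' ∉ QS ∧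
        S.out s1 = S.out s1' ∧ S.out s2 = S.out s2'

/-- Strong current-state opacity: the matching run is entirely non-secret. -/
def SCSO (S : LFSA Q E A) (QS : Set Q) : Prop :=
  ∀ q0 ∈ S.Q0, ∀ (s : List E) (q : Q), S.Run q0 s q → q ∈ QS →
    ∃ q0' ∈ S.Q0, ∃ (s' : List E) (q' : Q), S.RunIn QSᶜ q0' s' q' ∧ S.out s = S.out s'

/-- Strong initial-state opacity. -/
def SISO (S : LFSA Q E A) (QS : Set Q) : Prop :=
  ∀ q0 ∈ S.Q0 ∩ QS, ∀ (s : List E) (q : Q), S.Run q0 s q →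
    ∃ q0' ∈ S.Q0 \ QS, ∃ (s' : List E) (q' : Q), S.RunIn QSᶜ q0' s' q' ∧ S.out s = S.out s'

/-- Strong infinite-step opacity. -/
def SInfSO (S : LFSA Q E A) (QS : Set Q) : Prop :=
  ∀ q0 ∈ S.Q0, ∀ (s1 : List E) (q1 : Q) (s2 : List E) (q2 : Q),
    S.Run q0 s1 q1 → S.Run q1 s2 q2 → q1 ∈ QS →
    ∃ q0' ∈ S.Q0, ∃ (s1' : List E) (q1' : Q) (s2' : List E) (q2' : Q),
      S.RunIn QSᶜ q0' s1' q1' ∧ S.RunIn QSᶜ q1' s2' q2' ∧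
        S.out s1 = S.out s1' ∧ S.out s2 = S.out s2'

/-- Strong `K`-step opacity. -/
def SKSO (S : LFSA Q E A) (QS : Set Q) (K : ℕ) : Prop :=
  ∀ q0 ∈ S.Q0, ∀ (s1 : List E) (q1 : Q) (s2 : List E) (q2 : Q),
    S.Run q0 s1 q1 → S.Run q1 s2 q2 → q1 ∈ QS → (S.out s2).length ≤ K →
    ∃ q0' ∈ S.Q0, ∃ (s1' : List E) (q1' : Q) (s2' : List E) (q2' : Q),
      S.RunIn QSᶜ q0' s1' q1' ∧ S.RunIn QSᶜ q1' s2' q2' ∧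
        S.out s1 = S.out s1' ∧ S.out s2 = S.out s2'

/-- Observer step of the secret-deleted subautomaton `S_dss`. -/
def dssObsStep (S : LFSA Q E A) (QS : Set Q) : Set Q → A → Set Q :=
  (S.restrict QSᶜ).obsStep

/-- Initial observer state of the secret-deleted subautomaton. -/
def dssInit (S : LFSA Q E A) (QS : Set Q) : Set Q :=
  (S.restrict QSᶜ).UR (S.restrict QSᶜ).Q0

lemma Run.append' {S : LFSA Q E A} {q q' q'' : Q} {s t : List E}
    (h : S.Run q s q') (h' : S.Run q' t q'') : S.Run q (s ++ t) q'' := by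
  induction h with
  | nil => exact h'
  | cons hd _ ih => exact .cons hd (ih h')

lemma out_append' (S : LFSA Q E A) (s t : List E) :
    S.out (s ++ t) = S.out s ++ S.out t := List.filterMap_append ..

lemma out_cons_none {S : LFSA Q E A} {e : E} (h : S.lab e = none) (s : List E) :
    S.out (e :: s) = S.out s := by simp [out, h]

lemma out_cons_some {S : LFSA Q E A} {e : E} {a : A} (h : S.lab e = some a) (s : List E) :
    S.out (e :: s) = a :: S.out s := by simp [out, h]

/-- Checkpoint chain along a run: one state per produced output symbol. -/
lemma run_chain {T : LFSA Q E A} {q q' : Q} {s : List E} (h : T.Run q s q') :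
    ∃ f : ℕ → Q, f 0 = q ∧
      (∀ i < (T.out s).length, ∃ t, T.Run (f i) t (f (i+1)) ∧ (T.out t).length = 1) ∧
      (∃ t, T.Run (f ((T.out s).length)) t q' ∧ T.out t = []) := by
  induction h with
  | nil q => exact ⟨fun _ => q, rfl, by simp [out], [], .nil q, by simp [out]⟩
  | @cons q q1 q'' e s hd hr ih =>
    obtain ⟨f, hf0, hstep, tl, htl, htlout⟩ := ih
    cases he : T.lab e with
    | none =>
      refine ⟨fun i => if i = 0 then q else f i, rfl, ?_, ?_⟩
      · intro i hi
        rw [out_cons_none he] at hi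
        rcases Nat.eq_zero_or_pos i with h0 | h0
        · subst h0
          obtain ⟨t, ht, hto⟩ := hstep 0 hi
          refine ⟨e :: t, ?_, by rw [out_cons_none he]; exact hto⟩
          simp only [if_pos rfl, if_neg (by norm_num : (1:ℕ) ≠ 0)]
          exact .cons hd (hf0 ▸ ht)
        · simp only [if_neg h0.ne', if_neg (by omega : i + 1 ≠ 0)]
          exact hstep i hi
      · rw [out_cons_none he]
        rcases Nat.eq_zero_or_pos ((T.out s).length) with h0 | h0
        · rw [h0] at htl ⊢
          simp only [if_pos rfl]
          exact ⟨e :: tl, .cons hd (hf0 ▸ htl), by rw [out_cons_none he]; exact htlout⟩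
        · simp only [if_neg h0.ne']
          exact ⟨tl, htl, htlout⟩
    | some a =>
      refine ⟨fun i => if i = 0 then q else f (i - 1), rfl, ?_, ?_⟩
      · intro i hi
        rw [out_cons_some he] at hi
        rcases Nat.eq_zero_or_pos i with h0 | h0
        · subst h0
          refine ⟨[e], ?_, by rw [out_cons_some he]; simp [out]⟩
          simp only [if_pos rfl, if_neg (by norm_num : (1:ℕ) ≠ 0)]
          refine .cons hd ?_
          show T.Run q1 [] (f (1 - 1))
          rw [(by norm_num : 1 - 1 = 0), hf0]
          exact .nil q1
        · obtain ⟨j, rfl⟩ := Nat.exists_eq_add_of_lt h0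
          simp only [Nat.zero_add] at *
          obtain ⟨t, ht, hto⟩ := hstep j (by simpa using Nat.lt_of_succ_lt_succ hi)
          refine ⟨t, ?_, hto⟩
          simpa only [if_neg (by omega : j + 1 ≠ 0), if_neg (by omega : j + 1 + 1 ≠ 0),
            Nat.add_sub_cancel] using ht
      · rw [out_cons_some he]
        simp only [List.length_cons, if_neg (by omega : (T.out s).length + 1 ≠ 0),
          Nat.add_sub_cancel]
        exact ⟨tl, htl, htlout⟩

lemma run_compose {T : LFSA Q E A} {f : ℕ → Q} {n : ℕ}
    (hstep : ∀ i < n, ∃ t, T.Run (f i) t (f (i+1)) ∧ (T.out t).length = 1) :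
    ∀ i j, i ≤ j → j ≤ n → ∃ t, T.Run (f i) t (f j) ∧ (T.out t).length = j - i := by
  intro i j hij hjn
  induction j, hij using Nat.le_induction with
  | base => exact ⟨[], .nil _, by simp [out]⟩
  | succ j hij ih =>
    obtain ⟨t, ht, hto⟩ := ih (by omega)
    obtain ⟨t', ht', hto'⟩ := hstep j (by omega)
    refine ⟨t ++ t', ht.append' ht', ?_⟩
    rw [out_append', List.length_append, hto, hto']
    omega

/-- Pumping: a run with more output symbols than states contains a cycle with
nonempty output. -/
lemma run_pump {Q' : Type*} [Fintype Q'] {T : LFSA Q' E A} {q q' : Q'} {s : List E}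
    (h : T.Run q s q') (hlen : Fintype.card Q' < (T.out s).length) :
    ∃ q1 s1 s2 s3, T.Run q s1 q1 ∧ T.Run q1 s2 q1 ∧ T.Run q1 s3 q' ∧ T.out s2 ≠ [] := by
  obtain ⟨f, hf0, hstep, tl, htl, htlout⟩ := run_chain h
  set n := (T.out s).length with hn
  have hcard : Fintype.card Q' < Fintype.card (Fin (n + 1)) := by
    rw [Fintype.card_fin]; omega
  obtain ⟨i, j, hne, heq⟩ :=
    Fintype.exists_ne_map_eq_of_card_lt (fun i : Fin (n + 1) => f i) hcard
  obtain ⟨i, j, hij, hjn, hfeq⟩ : ∃ i j : ℕ, i < j ∧ j ≤ n ∧ f i = f j := by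
    rcases lt_or_gt_of_ne (Fin.val_ne_of_ne hne) with hlt | hlt
    · exact ⟨i, j, hlt, by omega, heq⟩
    · exact ⟨j, i, hlt, by omega, heq.symm⟩
  obtain ⟨s1, hs1, _⟩ := run_compose hstep 0 i (Nat.zero_le _) (by omega)
  obtain ⟨s2, hs2, hs2o⟩ := run_compose hstep i j hij.le hjn
  obtain ⟨s3, hs3, _⟩ := run_compose hstep i n (by omega) le_rfl
  rw [← hfeq] at hs2
  refine ⟨f i, s1, s2, s3 ++ tl, hf0 ▸ hs1, hs2, hs3.append' htl, ?_⟩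
  intro hnil
  rw [hnil] at hs2o
  simp at hs2o
  omega

/-- An ε-output run on the right component lifts to the concurrent composition. -/
lemma ccRun_right_eps {S : LFSA Q E A} {b b' : Q} {v : List E}
    (h : S.Run b v b') (hout : S.out v = []) (a : Q) :
    ∃ s, (S.CC S).Run (a, b) s (a, b') ∧ (S.CC S).out s = [] := by
  induction h with
  | nil q => exact ⟨[], .nil _, rfl⟩
  | @cons b b1 b'' e v hd hr ih =>
    have he : S.lab e = none := by
      cases he : S.lab e with
      | none => rfl
      | some x => rw [out_cons_some he] at hout; simp at hout
    rw [out_cons_none he] at hout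
    obtain ⟨s, hs, hso⟩ := ih hout
    refine ⟨(none, some e) :: s, .cons (q' := (a, b1)) ⟨he, rfl, hd⟩ hs, ?_⟩
    rw [out_cons_none (show (S.CC S).lab (none, some e) = none from rfl)]
    exact hso

/-- Decompose a run whose output starts with `a`. -/
lemma run_decomp_obs {S : LFSA Q E A} {b b' : Q} {v : List E} {a : A} {σ : List A}
    (h : S.Run b v b') (hout : S.out v = a :: σ) :
    ∃ m m' w e v', S.Run b w m ∧ S.out w = [] ∧ S.δ m e m' ∧ S.lab e = some a ∧
      S.Run m' v' b' ∧ S.out v' = σ := by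
  induction h with
  | nil q => simp [out] at hout
  | @cons b b1 b'' e v hd hr ih =>
    cases he : S.lab e with
    | none =>
      rw [out_cons_none he] at hout
      obtain ⟨m, m', w, e2, v', h1, h2, h3, h4, h5, h6⟩ := ih hout
      exact ⟨m, m', e :: w, e2, v', .cons hd h1, by rw [out_cons_none he]; exact h2,
        h3, h4, h5, h6⟩
    | some a0 =>
      rw [out_cons_some he] at hout
      obtain ⟨ha, hv⟩ := List.cons_eq_cons.mp hout
      subst ha
      exact ⟨b, b1, [], e, v, .nil b, by simp [out], hd, he, hr, hv⟩

/-- Synchronization: two runs with equal outputs combine into a run of `CC(S,S)`. -/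
lemma ccRun_sync {S : LFSA Q E A} {a a' : Q} {u : List E} (hu : S.Run a u a') :
    ∀ {b b' : Q} {v : List E}, S.Run b v b' → S.out u = S.out v →
      ∃ s, (S.CC S).Run (a, b) s (a', b') ∧ (S.CC S).out s = S.out u := by
  induction hu with
  | nil q =>
    intro b b' v hv hout
    obtain ⟨s, hs, hso⟩ := ccRun_right_eps hv (by simpa [out] using hout.symm) q
    exact ⟨s, hs, by rw [hso]; simp [out]⟩
  | @cons a a1 a'' e u hd hr ih =>
    intro b b' v hv hout
    cases he : S.lab e with
    | none =>
      rw [out_cons_none he] at hout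
      obtain ⟨s, hs, hso⟩ := ih hv hout
      refine ⟨(some e, none) :: s, .cons (q' := (a1, b)) ⟨he, hd, rfl⟩ hs, ?_⟩
      rw [out_cons_none (show (S.CC S).lab (some e, none) = none from he), hso,
        out_cons_none he]
    | some α =>
      rw [out_cons_some he] at hout
      obtain ⟨m, m', w, e2, v', h1, h2, h3, h4, h5, h6⟩ := run_decomp_obs hv hout.symm
      obtain ⟨s0, hs0, hs0o⟩ := ccRun_right_eps h1 h2 a
      obtain ⟨s, hs, hso⟩ := ih h5 h6.symm
      refine ⟨s0 ++ (some e, some e2) :: s, hs0.append' (.cons (q' := (a1, m')) ⟨⟨α, he, h4⟩, hd, h3⟩ hs), ?_⟩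
      rw [out_append', hs0o, List.nil_append,
        out_cons_some (show (S.CC S).lab (some e, some e2) = some α from he), hso,
        out_cons_some he]

/-- Projection of a `CC(S,S)` run onto both components. -/
lemma ccRun_proj {S : LFSA Q E A} {p p' : Q × Q} {s : List (Option E × Option E)}
    (h : (S.CC S).Run p s p') :
    S.Run p.1 (s.filterMap Prod.fst) p'.1 ∧ S.Run p.2 (s.filterMap Prod.snd) p'.2 ∧
      S.out (s.filterMap Prod.fst) = (S.CC S).out s ∧
      S.out (s.filterMap Prod.snd) = (S.CC S).out s := by
  induction h with
  | nil q => exact ⟨.nil _, .nil _, rfl, rfl⟩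
  | @cons p p1 p'' ev s hd hr ih =>
    obtain ⟨ih1, ih2, ih3, ih4⟩ := ih
    rcases ev with ⟨_ | e1, _ | e2⟩
    · exact absurd hd id
    · obtain ⟨he, hp1, hδ⟩ := hd
      refine ⟨?_, ?_, ?_, ?_⟩
      · show S.Run p.1 (List.filterMap Prod.fst s) p''.1
        rw [hp1]; exact ih1
      · show S.Run p.2 (e2 :: List.filterMap Prod.snd s) p''.2
        exact .cons hδ ih2
      · show S.out (List.filterMap Prod.fst s) = (S.CC S).out ((none, some e2) :: s)
        rw [ih3, out_cons_none (show (S.CC S).lab (none, some e2) = none from rfl)]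
      · show S.out (e2 :: List.filterMap Prod.snd s) = (S.CC S).out ((none, some e2) :: s)
        rw [out_cons_none he, ih4,
          out_cons_none (show (S.CC S).lab (none, some e2) = none from rfl)]
    · obtain ⟨he, hδ, hp2⟩ := hd
      refine ⟨?_, ?_, ?_, ?_⟩
      · show S.Run p.1 (e1 :: List.filterMap Prod.fst s) p''.1
        exact .cons hδ ih1
      · show S.Run p.2 (List.filterMap Prod.snd s) p''.2
        rw [hp2]; exact ih2
      · show S.out (e1 :: List.filterMap Prod.fst s) = (S.CC S).out ((some e1, none) :: s)
        rw [out_cons_none he, ih3,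
          out_cons_none (show (S.CC S).lab (some e1, none) = none from he)]
      · show S.out (List.filterMap Prod.snd s) = (S.CC S).out ((some e1, none) :: s)
        rw [ih4, out_cons_none (show (S.CC S).lab (some e1, none) = none from he)]
    · obtain ⟨⟨α, he1, he2⟩, hδ1, hδ2⟩ := hd
      refine ⟨?_, ?_, ?_, ?_⟩
      · show S.Run p.1 (e1 :: List.filterMap Prod.fst s) p''.1
        exact .cons hδ1 ih1
      · show S.Run p.2 (e2 :: List.filterMap Prod.snd s) p''.2
        exact .cons hδ2 ih2
      · show S.out (e1 :: List.filterMap Prod.fst s) = (S.CC S).out ((some e1, some e2) :: s)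
        rw [out_cons_some he1, ih3,
          out_cons_some (show (S.CC S).lab (some e1, some e2) = some α from he1)]
      · show S.out (e2 :: List.filterMap Prod.snd s) = (S.CC S).out ((some e1, some e2) :: s)
        rw [out_cons_some he2, ih4,
          out_cons_some (show (S.CC S).lab (some e1, some e2) = some α from he1)]

/-- Every prefix of the output of a run is realized by some run from the same state. -/
lemma run_realize_prefix {S : LFSA Q E A} {q qe : Q} {s : List E} (h : S.Run q s qe) :
    ∀ σ, σ <+: S.out s → ∃ s0 q1, S.Run q s0 q1 ∧ S.out s0 = σ := by
  induction h with
  | nil q =>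
    intro σ hσ
    have : σ = [] := List.prefix_nil.mp (by simpa [out] using hσ)
    exact ⟨[], q, .nil q, by simp [out, this]⟩
  | @cons q q1 q'' e s hd hr ih =>
    intro σ hσ
    cases he : S.lab e with
    | none =>
      rw [out_cons_none he] at hσ
      obtain ⟨s0, m, hrun, hout⟩ := ih σ hσ
      exact ⟨e :: s0, m, .cons hd hrun, by rw [out_cons_none he]; exact hout⟩
    | some a =>
      rw [out_cons_some he] at hσ
      rcases σ with _ | ⟨a', σ'⟩
      · exact ⟨[], q, .nil q, by simp [out]⟩
      · obtain ⟨ha, hσ'⟩ := List.cons_prefix_cons.mp hσ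
        subst ha
        obtain ⟨s0, m, hrun, hout⟩ := ih σ' hσ'
        exact ⟨e :: s0, m, .cons hd hrun, by rw [out_cons_some he, hout]⟩

/-- Iterate a cycle with nonempty output to get arbitrarily long output. -/
lemma cycle_iter {T : LFSA Q E A} {q : Q} {s : List E} (h : T.Run q s q)
    (hne : T.out s ≠ []) : ∀ n : ℕ, ∃ t, T.Run q t q ∧ n ≤ (T.out t).length := by
  intro n
  induction n with
  | zero => exact ⟨[], .nil q, Nat.zero_le _⟩
  | succ n ih =>
    obtain ⟨t, ht, hlen⟩ := ih
    refine ⟨t ++ s, ht.append' h, ?_⟩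
    rw [out_append', List.length_append]
    have := List.length_pos_iff.mpr hne
    omega

end LFSA

/-- concurrent-composition characterization of non-*-strong detectability. -/
theorem stmt1 {Q E A : Type*} [Fintype Q] (S : LFSA Q E A) :
    ¬ S.StarSD ↔
      ∃ q0' ∈ (S.CC S).Q0, ∃ (q1' q2' : Q × Q)
        (s1' s2' s3' : List (Option E × Option E)),
        (S.CC S).Run q0' s1' q1' ∧ (S.CC S).Run q1' s2' q1' ∧ (S.CC S).Run q1' s3' q2' ∧
        (S.CC S).out s2' ≠ [] ∧ q2'.1 ≠ q2'.2 := by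
  constructor
  · -- ⇒ : not detectable gives a witness in the self-composition
    intro hnsd
    rw [LFSA.StarSD] at hnsd
    push_neg at hnsd
    obtain ⟨s, hsL, σ, hpre, hlen, hne⟩ :=
      hnsd (Fintype.card (Q × Q) + 1) (by omega)
    obtain ⟨q0, hq0, qe, hrun⟩ := hsL
    obtain ⟨s0, x, hrunx, houtx⟩ := LFSA.run_realize_prefix hrun σ hpre
    have hxM : x ∈ S.M σ := ⟨q0, hq0, s0, houtx, hrunx⟩
    have : ∃ y ∈ S.M σ, y ≠ x := by
      by_contra hcon
      push_neg at hcon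
      exact hne x (Set.eq_singleton_iff_unique_mem.mpr ⟨hxM, hcon⟩)
    obtain ⟨y, ⟨p0, hp0, v, houty, hrunv⟩, hyx⟩ := this
    obtain ⟨s', hccrun, hccout⟩ :=
      LFSA.ccRun_sync hrunx hrunv (by rw [houtx, houty])
    have hlong : Fintype.card (Q × Q) < ((S.CC S).out s').length := by
      rw [hccout, houtx]; omega
    obtain ⟨q1, t1, t2, t3, h1, h2, h3, hnz⟩ := LFSA.run_pump hccrun hlong
    exact ⟨(q0, p0), ⟨hq0, hp0⟩, q1, (x, y), t1, t2, t3, h1, h2, h3, hnz,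
      fun hxy => hyx hxy.symm⟩
  · -- ⇐ : witness gives failure of detectability
    rintro ⟨q0', hq0', q1', q2', s1', s2', s3', h1, h2, h3, hnz, hneq⟩ ⟨k, hk, hsd⟩
    obtain ⟨t, ht, htlen⟩ := LFSA.cycle_iter h2 hnz (k + 1)
    have hfull : (S.CC S).Run q0' (s1' ++ (t ++ s3')) q2' :=
      h1.append' (ht.append' h3)
    obtain ⟨hl, hr, hlo, hro⟩ := LFSA.ccRun_proj hfull
    set sl := (s1' ++ (t ++ s3')).filterMap Prod.fst with hsl
    set sr := (s1' ++ (t ++ s3')).filterMap Prod.snd with hsr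
    have hlen : k < (S.out sl).length := by
      rw [hlo, LFSA.out_append', LFSA.out_append']
      simp only [List.length_append]
      omega
    have hslL : sl ∈ S.L := ⟨q0'.1, hq0'.1, q2'.1, hl⟩
    obtain ⟨q, hM⟩ := hsd sl hslL (S.out sl) List.prefix_rfl hlen
    have hx : q2'.1 ∈ S.M (S.out sl) := ⟨q0'.1, hq0'.1, sl, rfl, hl⟩
    have hy : q2'.2 ∈ S.M (S.out sl) := ⟨q0'.2, hq0'.2, sr, by rw [hro, hlo], hr⟩
    rw [hM] at hx hy
    exact hneq (hx.trans hy.symm)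
end

section
/- If in the self-composition CC(S) of an LFSA S there exists a run q0' →s1' q1' →s2' q1' →s3' q2' with q0' initial, ℓ(s2') of positive length, and q2'(L) ≠ q2'(R), then for every positive integer k the event sequence s = s1'(L)(s2'(L))^{k+1} s3'(L) belongs to L(S), satisfies |ℓ(s)| > k, and |M(S, ℓ(s))| > 1. -/
namespace LFSA

variable {Q E A : Type*}

theorem run_append {S : LFSA Q E A} {q q' q'' : Q} {s t : List E}
    (h1 : S.Run q s q') (h2 : S.Run q' t q'') : S.Run q (s ++ t) q'' := by
  induction h1 with
  | nil => simpa using h2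
  | cons hd _ ih => exact Run.cons hd (ih h2)

theorem run_join {S : LFSA Q E A} {q : Q} {s : List E} (h : S.Run q s q) (n : ℕ) :
    S.Run q (List.replicate n s).flatten q := by
  induction n with
  | zero => exact Run.nil q
  | succ n ih => simpa [List.replicate_succ] using run_append h ih

theorem cc_run {S : LFSA Q E A} {p p' : Q × Q} {s : List (Option E × Option E)}
    (h : (S.CC S).Run p s p') :
    S.Run p.1 (lproj s) p'.1 ∧ S.Run p.2 (rproj s) p'.2 ∧
      S.out (lproj s) = (S.CC S).out s ∧ S.out (rproj s) = (S.CC S).out s := by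
  induction h with
  | nil q => exact ⟨Run.nil _, Run.nil _, rfl, rfl⟩
  | @cons q q' q'' ev t hd htail ih =>
    obtain ⟨hl, hr, hol, hor⟩ := ih
    obtain ⟨e1, e2⟩ := ev
    match e1, e2 with
    | some e, some e' =>
      obtain ⟨⟨a, ha1, ha2⟩, hd1, hd2⟩ := hd
      refine ⟨Run.cons hd1 hl, Run.cons hd2 hr, ?_, ?_⟩ <;>
        simp [lproj, rproj, out, CC, ha1, ha2] at * <;> simp_all [out]
    | some e, none =>
      obtain ⟨ha, hd1, heq⟩ := hd
      refine ⟨Run.cons hd1 hl, by rw [heq]; exact hr, ?_, ?_⟩ <;>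
        simp [lproj, rproj, out, CC, ha] at * <;> simp_all [out]
    | none, some e' =>
      obtain ⟨ha, heq, hd2⟩ := hd
      refine ⟨by rw [heq]; exact hl, Run.cons hd2 hr, ?_, ?_⟩ <;>
        simp [lproj, rproj, out, CC, ha] at * <;> simp_all [out]
    | none, none => exact absurd hd (by simp [CC])

end LFSA

/-- the pumped event sequence witnesses non-detectability for every `k`. -/
theorem stmt3 {Q E A : Type*} (S : LFSA Q E A)
    (q0' q1' q2' : Q × Q) (s1' s2' s3' : List (Option E × Option E))
    (h0 : q0' ∈ (S.CC S).Q0)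
    (h1 : (S.CC S).Run q0' s1' q1') (h2 : (S.CC S).Run q1' s2' q1')
    (h3 : (S.CC S).Run q1' s3' q2')
    (hσ : (S.CC S).out s2' ≠ []) (hne : q2'.1 ≠ q2'.2) :
    ∀ k : ℕ, 0 < k →
      (LFSA.lproj s1' ++ (List.replicate (k + 1) (LFSA.lproj s2')).flatten
          ++ LFSA.lproj s3') ∈ S.L ∧
      k < (S.out (LFSA.lproj s1' ++ (List.replicate (k + 1) (LFSA.lproj s2')).flatten
          ++ LFSA.lproj s3')).length ∧
      ∃ qa ∈ S.M (S.out (LFSA.lproj s1' ++ (List.replicate (k + 1) (LFSA.lproj s2')).flatten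
          ++ LFSA.lproj s3')),
        ∃ qb ∈ S.M (S.out (LFSA.lproj s1' ++ (List.replicate (k + 1) (LFSA.lproj s2')).flatten
          ++ LFSA.lproj s3')), qa ≠ qb := by
  intro k hk
  obtain ⟨hl1, hr1, hol1, hor1⟩ := LFSA.cc_run h1
  obtain ⟨hl2, hr2, hol2, hor2⟩ := LFSA.cc_run h2
  obtain ⟨hl3, hr3, hol3, hor3⟩ := LFSA.cc_run h3
  set sL := LFSA.lproj s1' ++ (List.replicate (k + 1) (LFSA.lproj s2')).flatten
      ++ LFSA.lproj s3' with hsL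
  set sR := LFSA.rproj s1' ++ (List.replicate (k + 1) (LFSA.rproj s2')).flatten
      ++ LFSA.rproj s3' with hsR
  have hrunL : S.Run q0'.1 sL q2'.1 :=
    LFSA.run_append (LFSA.run_append hl1 (LFSA.run_join hl2 (k + 1))) hl3
  have hrunR : S.Run q0'.2 sR q2'.2 :=
    LFSA.run_append (LFSA.run_append hr1 (LFSA.run_join hr2 (k + 1))) hr3
  have houtL : S.out sL = S.out (LFSA.lproj s1')
      ++ (List.replicate (k + 1) (S.out (LFSA.lproj s2'))).flatten
      ++ S.out (LFSA.lproj s3') := by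
    simp [hsL, LFSA.out, List.filterMap_append, List.filterMap_flatten]
  have houtR : S.out sR = S.out (LFSA.rproj s1')
      ++ (List.replicate (k + 1) (S.out (LFSA.rproj s2'))).flatten
      ++ S.out (LFSA.rproj s3') := by
    simp [hsR, LFSA.out, List.filterMap_append, List.filterMap_flatten]
  have houtEq : S.out sR = S.out sL := by
    rw [houtL, houtR, hol1, hor1, hol2, hor2, hol3, hor3]
  obtain ⟨h01, h02⟩ := h0
  refine ⟨⟨q0'.1, h01, q2'.1, hrunL⟩, ?_, q2'.1, ⟨q0'.1, h01, sL, rfl, hrunL⟩,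
    q2'.2, ⟨q0'.2, h02, sR, houtEq, hrunR⟩, hne⟩
  have hlen2 : 0 < (S.out (LFSA.lproj s2')).length := by
    rw [hol2]; exact List.length_pos_iff.mpr hσ
  rw [houtL]
  have : (k + 1) * 1 ≤ (k + 1) * (S.out (LFSA.lproj s2')).length :=
    Nat.mul_le_mul_left _ hlen2
  simp only [List.length_append, List.length_flatten, List.map_replicate,
    List.sum_replicate, smul_eq_mul]
  omega
end

section
/- An LFSA S is initial-state opaque with respect to Q_S if and only if (Q0 ≠ ∅ implies Q0 ⊄ Q_S) and for every secret initial state q0 ∈ Q0 ∩ Q_S, all states reachable in the concurrent composition CC(S_ε, S_obs^ε) from (q0, UR(Q0 \ Q_S)) have nonempty right component. -/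
namespace Stmt9Aux

open LFSA

variable {Q E A : Type*} {S : LFSA Q E A}

lemma run_append {q q' q'' : Q} {s t : List E} (h : S.Run q s q') (h' : S.Run q' t q'') :
    S.Run q (s ++ t) q'' := by
  induction h with
  | nil => exact h'
  | cons hd _ ih => exact .cons hd (ih h')

lemma run_split {q q'' : Q} {s t : List E} (h : S.Run q (s ++ t) q'') :
    ∃ q', S.Run q s q' ∧ S.Run q' t q'' := by
  induction s generalizing q with
  | nil => exact ⟨q, .nil q, h⟩
  | cons e s ih =>
    cases h with
    | cons hd hr =>
      obtain ⟨q', h1, h2⟩ := ih hr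
      exact ⟨q', .cons hd h1, h2⟩

lemma out_append (s t : List E) : S.out (s ++ t) = S.out s ++ S.out t := by
  simp [LFSA.out]

lemma out_split_first {a : A} {σ : List A} :
    ∀ {s : List E}, S.out s = a :: σ →
      ∃ s1 e s2, s = s1 ++ e :: s2 ∧ S.out s1 = [] ∧ S.lab e = some a ∧ S.out s2 = σ := by
  intro s
  induction s with
  | nil => intro h; simp [LFSA.out] at h
  | cons e t ih =>
    intro h
    rcases he : S.lab e with _ | b
    · rw [LFSA.out, List.filterMap_cons, he] at h
      obtain ⟨s1, e', s2, rfl, h1, h2, h3⟩ := ih h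
      exact ⟨e :: s1, e', s2, rfl, by simp [LFSA.out, he]; simpa [LFSA.out] using h1, h2, h3⟩
    · rw [LFSA.out, List.filterMap_cons, he] at h
      injection h with h1 h2
      exact ⟨[], e, t, rfl, rfl, by rw [he, h1], h2⟩

lemma obsRun_iff (σ : List A) :
    ∀ (X : Set Q) (P : Q → Prop),
      (∀ q, q ∈ X ↔ ∃ q0, P q0 ∧ ∃ s, S.out s = [] ∧ S.Run q0 s q) →
      ∀ q', (q' ∈ S.obsRun X σ ↔ ∃ q0, P q0 ∧ ∃ s, S.out s = σ ∧ S.Run q0 s q') := by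
  induction σ with
  | nil => intro X P hX q'; exact hX q'
  | cons a σ ih =>
    intro X P hX q'
    have step : q' ∈ S.obsRun X (a :: σ) ↔ q' ∈ S.obsRun (S.obsStep X a) σ := Iff.rfl
    have hX' : ∀ q, q ∈ S.obsStep X a ↔
        ∃ q0, (∃ q1, P q1 ∧ ∃ s, S.out s = [a] ∧ S.Run q1 s q0) ∧
          ∃ s, S.out s = [] ∧ S.Run q0 s q := by
      intro q
      constructor
      · rintro ⟨q1, hq1X, e, p, hlab, hδ, hUR⟩
        obtain ⟨p0, hp0, s3, hs3, hr3⟩ := hUR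
        cases hp0
        obtain ⟨q0, hP, s0, hs0, hr0⟩ := (hX q1).1 hq1X
        refine ⟨p, ⟨q0, hP, s0 ++ [e], ?_, run_append hr0 (.cons hδ (.nil p))⟩, s3, hs3, hr3⟩
        rw [out_append, hs0]
        simp [LFSA.out, hlab]
      · rintro ⟨q0, ⟨q1, hP, s, hs, hr⟩, s3, hs3, hr3⟩
        obtain ⟨s1, e, s2, rfl, h1, h2, h3⟩ := out_split_first hs
        obtain ⟨m, hm1, hm2⟩ := run_split hr
        cases hm2 with
        | cons hδ hr2 =>
          refine ⟨m, (hX m).2 ⟨q1, hP, s1, h1, hm1⟩, e, _, h2, hδ, _, rfl, s2 ++ s3, ?_,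
            run_append hr2 hr3⟩
          rw [out_append, h3, hs3]; rfl
    rw [step, ih (S.obsStep X a)
        (fun q0 => ∃ q1, P q1 ∧ ∃ s, S.out s = [a] ∧ S.Run q1 s q0) hX' q']
    constructor
    · rintro ⟨q0, ⟨q1, hP, s1, hs1, hr1⟩, s2, hs2, hr2⟩
      refine ⟨q1, hP, s1 ++ s2, ?_, run_append hr1 hr2⟩
      rw [out_append, hs1, hs2]; rfl
    · rintro ⟨q1, hP, s, hs, hr⟩
      obtain ⟨s1, e, s2, rfl, h1, h2, h3⟩ := out_split_first hs
      obtain ⟨m, hm1, hm2⟩ := run_split hr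
      cases hm2 with
      | cons hδ hr2 =>
        refine ⟨_, ⟨q1, hP, s1 ++ [e], ?_, run_append hm1 (.cons hδ (.nil _))⟩, s2, h3, hr2⟩
        rw [out_append, h1]
        simp [LFSA.out, h2]

lemma mem_obsRun_UR {X0 : Set Q} {σ : List A} {q' : Q} :
    q' ∈ S.obsRun (S.UR X0) σ ↔ ∃ q0 ∈ X0, ∃ s, S.out s = σ ∧ S.Run q0 s q' := by
  exact obsRun_iff (S := S) σ (S.UR X0) (· ∈ X0) (fun q => Iff.rfl) q'

lemma ccobs_run_left {ostep : Set Q → A → Set Q} {x0 : Set Q} :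
    ∀ {s : List E} {p1 p : Q × Set Q}, (S.CCObs ostep x0).Run p1 s p →
      S.Run p1.1 s p.1 ∧ p.2 = List.foldl ostep p1.2 (S.out s) := by
  intro s p1 p h
  induction h with
  | nil q => exact ⟨.nil _, rfl⟩
  | @cons q q' q'' e s hd hr ih =>
    obtain ⟨h1, h2, h3⟩ := hd
    refine ⟨.cons h1 ih.1, ?_⟩
    rcases hl : S.lab e with _ | a
    · rw [ih.2, h3 hl]; simp [LFSA.out, hl]
    · rw [ih.2, h2 a hl]; simp [LFSA.out, hl]

lemma ccobs_run_lift {ostep : Set Q → A → Set Q} {x0 : Set Q} :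
    ∀ {s : List E} {q0 q : Q}, S.Run q0 s q → ∀ X : Set Q,
      (S.CCObs ostep x0).Run (q0, X) s (q, List.foldl ostep X (S.out s)) := by
  intro s q0 q h
  induction h with
  | nil q => intro X; exact Run.nil (q, X)
  | @cons q q' q'' e s hd hr ih =>
    intro X
    rcases hl : S.lab e with _ | a
    · have hδ : (S.CCObs ostep x0).δ (q, X) e (q', X) :=
        And.intro hd (And.intro (fun b hb => by rw [hl] at hb; cases hb) (fun _ => rfl))
      have : S.out (e :: s) = S.out s := by simp [LFSA.out, hl]
      rw [this]
      exact .cons hδ (ih X)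
    · have hδ : (S.CCObs ostep x0).δ (q, X) e (q', ostep X a) :=
        And.intro hd (And.intro (fun b hb => by rw [hl] at hb; cases hb; rfl) (fun hb => by rw [hl] at hb; cases hb))
      have : S.out (e :: s) = a :: S.out s := by simp [LFSA.out, hl]
      rw [this]
      exact .cons hδ (ih (ostep X a))

end Stmt9Aux

/-- concurrent-composition characterization of initial-state opacity. -/
theorem stmt9 {Q E A : Type*} (S : LFSA Q E A) (QS : Set Q) :
    S.ISO QS ↔
      ((S.Q0.Nonempty → ¬ S.Q0 ⊆ QS) ∧
        ∀ q0 ∈ S.Q0 ∩ QS, ∀ (s : List E) (p : Q × Set Q),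
          (S.CCObs S.obsStep (S.UR S.Q0)).Run (q0, S.UR (S.Q0 \ QS)) s p →
            p.2.Nonempty) := by
  constructor
  · intro hISO
    constructor
    · rintro ⟨q0, hq0⟩ hsub
      obtain ⟨q0', hq0', -⟩ := hISO q0 ⟨hq0, hsub hq0⟩ [] q0 (.nil q0)
      exact hq0'.2 (hsub hq0'.1)
    · intro q0 hq0 s p hrun
      obtain ⟨hl, hr⟩ := Stmt9Aux.ccobs_run_left hrun
      obtain ⟨q0', hq0', s', q', hr', hout⟩ := hISO q0 hq0 s p.1 hl
      refine ⟨q', ?_⟩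
      rw [hr]
      exact Stmt9Aux.mem_obsRun_UR.2 ⟨q0', hq0', s', hout.symm, hr'⟩
  · rintro ⟨-, h2⟩ q0 hq0 s q hrun
    obtain ⟨q', hq'⟩ := h2 q0 hq0 s (q, S.obsRun (S.UR (S.Q0 \ QS)) (S.out s))
      (Stmt9Aux.ccobs_run_lift hrun _)
    obtain ⟨q0', hq0', s', hout, hr'⟩ := Stmt9Aux.mem_obsRun_UR.1 hq'
    exact ⟨q0', hq0', s', q', hr', hout.symm⟩
end
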